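/- Let A be a normed ring, H, P : ℝ → A differentiable, μ, λ : ℝ → ℂ with μ differentiable, and Q : ℝ → A such that for all t: H(t)P(t) = μ(t)P(t), Q(t)H(t) = λ(t)Q(t), and Q(t)P(t) = 0. Then (λ(t) − μ(t))·Q(t)·P'(t) = −Q(t)·H'(t)·P(t) for all t. -/

import Mathlib

theorem stmt16 {A : Type*} [NormedRing A] [NormedAlgebra ℂ A]
    (H P Q : ℝ → A) (μ lam : ℝ → ℂ)
    (hH : Differentiable ℝ H) (hP : Differentiable ℝ P) (hμ : Differentiable ℝ μ)
    (heigP : ∀ t, H t * P t = μ t • P t)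
    (heigQ : ∀ t, Q t * H t = lam t • Q t)
    (hQP : ∀ t, Q t * P t = 0) :
    ∀ t, (lam t - μ t) • (Q t * deriv P t) = -(Q t * deriv H t * P t) := by
  intro t
  have hderiv : deriv (fun t => H t * P t) t = deriv (fun t => μ t • P t) t := by
    congr 1
    funext s
    exact heigP s
  rw [deriv_fun_mul (hH t) (hP t), deriv_fun_smul (hμ t) (hP t)] at hderiv
  have key := congrArg (fun x => Q t * x) hderiv
  simp only [mul_add, mul_smul_comm, ← mul_assoc, hQP t, heigQ t, smul_mul_assoc,
    zero_mul, smul_zero, zero_add] at key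
  -- key : Q t * deriv H t * P t + lam t • (Q t * deriv P t) = μ t • (Q t * deriv P t)
  rw [add_zero] at key
  rw [sub_smul, ← key]
  abel
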